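/- Define f_α(θ) = tanh(½(θ + iπα))/tanh(½(θ − iπα)) for complex θ, and let S₂₂(θ) = f_{12/18}(θ) · f_{8/18}(θ) · f_{2/18}(θ) be the A₂A₂ scattering amplitude of the E₇ model. Then (θ − 12iπ/18) · S₂₂(θ) tends to i · 2√3 · (cos(π/18)/sin(π/18)) · (cos(π/9)/sin(π/9))² · (sin(2π/9)/cos(2π/9)) as θ → 12iπ/18 (limit along complex θ ≠ 12iπ/18). Equivalently, the residue of S₂₂ at the A₂ self-fusion pole equals i·|Γ₂₂²|² with |Γ₂₂²|² = 2√3 · cot(π/18) · cot²(π/9) · tan(2π/9). -/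

import Mathlib

open Filter

/-- The S-matrix building block `f_α(θ) = tanh(½(θ+iπα))/tanh(½(θ−iπα))`. -/
noncomputable def fblock (α : ℝ) (θ : ℂ) : ℂ :=
  Complex.tanh ((θ + Complex.I * (Real.pi : ℂ) * (α : ℂ)) / 2) /
    Complex.tanh ((θ - Complex.I * (Real.pi : ℂ) * (α : ℂ)) / 2)

/-- The A₂A₂ scattering amplitude of the E₇ model, `S₂₂ = f_{12/18}·f_{8/18}·f_{2/18}`. -/
noncomputable def S22 (θ : ℂ) : ℂ := fblock (12 / 18) θ * fblock (8 / 18) θ * fblock (2 / 18) θ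

lemma continuousAt_ctanh {z : ℂ} (h : Complex.cosh z ≠ 0) : ContinuousAt Complex.tanh z := by
  have h1 : ContinuousAt (fun w => Complex.sinh w / Complex.cosh w) z :=
    Complex.continuous_sinh.continuousAt.div Complex.continuous_cosh.continuousAt h
  have : Complex.tanh = fun w => Complex.sinh w / Complex.cosh w :=
    funext fun w => Complex.tanh_eq_sinh_div_cosh w
  rw [this]; exact h1

lemma tendsto_z_div_tanh_half :
    Tendsto (fun z : ℂ => z / Complex.tanh (z / 2)) (nhdsWithin 0 {(0:ℂ)}ᶜ) (nhds 2) := by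
  have hs : Tendsto (fun z : ℂ => Complex.sinh z / z) (nhdsWithin 0 {(0:ℂ)}ᶜ) (nhds 1) := by
    have h := Complex.hasDerivAt_sinh 0
    rw [hasDerivAt_iff_tendsto_slope] at h
    rw [Complex.cosh_zero] at h
    refine h.congr fun z => ?_
    rw [slope_def_field, Complex.sinh_zero, sub_zero, sub_zero]
  have hhalf : Tendsto (fun z : ℂ => z / 2) (nhdsWithin 0 {(0:ℂ)}ᶜ) (nhdsWithin 0 {(0:ℂ)}ᶜ) := by
    rw [tendsto_nhdsWithin_iff]
    constructor
    · simpa using ((continuous_id.div_const (2:ℂ)).tendsto 0).mono_left nhdsWithin_le_nhds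
    · filter_upwards [self_mem_nhdsWithin] with z hz
      simp only [Set.mem_compl_iff, Set.mem_singleton_iff] at hz ⊢
      exact div_ne_zero hz two_ne_zero
  have h1 : Tendsto (fun z : ℂ => Complex.sinh (z / 2) / (z / 2))
      (nhdsWithin 0 {(0:ℂ)}ᶜ) (nhds 1) := hs.comp hhalf
  have h2 : Tendsto (fun z : ℂ => Complex.cosh (z / 2)) (nhdsWithin 0 {(0:ℂ)}ᶜ) (nhds 1) := by
    simpa [Function.comp_def] using ((Complex.continuous_cosh.comp (continuous_id.div_const (2:ℂ))).tendsto 0).mono_left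
      nhdsWithin_le_nhds
  have h3 := (h1.inv₀ one_ne_zero).mul h2
  have h4 := h3.const_mul (2:ℂ)
  have h5 : Tendsto (fun z : ℂ =>
      2 * ((Complex.sinh (z / 2) / (z / 2))⁻¹ * Complex.cosh (z / 2)))
      (nhdsWithin 0 {(0:ℂ)}ᶜ) (nhds 2) := by simpa using h4
  refine h5.congr fun z => ?_
  rw [Complex.tanh_eq_sinh_div_cosh, inv_div, div_div_eq_mul_div]
  ring

/-- the residue of `S₂₂` at the A₂ self-fusion pole `θ = 12iπ/18` equals
`i·|Γ₂₂²|²` with `|Γ₂₂²|² = 2√3·cot(π/18)·cot²(π/9)·tan(2π/9)`. -/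
theorem S22_residue_at_A2 :
    Tendsto (fun θ : ℂ => (θ - 12 * (Real.pi : ℂ) * Complex.I / 18) * S22 θ)
      (nhdsWithin (12 * (Real.pi : ℂ) * Complex.I / 18)
        {(12 * (Real.pi : ℂ) * Complex.I / 18 : ℂ)}ᶜ)
      (nhds (Complex.I *
        ((2 * Real.sqrt 3 * (Real.cos (Real.pi / 18) / Real.sin (Real.pi / 18)) *
          (Real.cos (Real.pi / 9) / Real.sin (Real.pi / 9)) ^ 2 *
          (Real.sin (2 * Real.pi / 9) / Real.cos (2 * Real.pi / 9)) : ℝ) : ℂ))) := by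
  have pi_pos := Real.pi_pos
  set θ₀ : ℂ := 12 * (Real.pi : ℂ) * Complex.I / 18 with hθ₀def
  -- arguments of the five tanh's at θ = θ₀, as purely imaginary numbers
  have harg1 : (θ₀ + Complex.I * (Real.pi : ℂ) * ((12/18 : ℝ) : ℂ)) / 2
      = ((Real.pi - Real.pi / 3 : ℝ) : ℂ) * Complex.I := by
    rw [hθ₀def]; push_cast; ring
  have harg2 : (θ₀ + Complex.I * (Real.pi : ℂ) * ((8/18 : ℝ) : ℂ)) / 2
      = ((Real.pi - (Real.pi / 2 - Real.pi / 18) : ℝ) : ℂ) * Complex.I := by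
    rw [hθ₀def]; push_cast; ring
  have harg3 : (θ₀ - Complex.I * (Real.pi : ℂ) * ((8/18 : ℝ) : ℂ)) / 2
      = ((Real.pi / 9 : ℝ) : ℂ) * Complex.I := by
    rw [hθ₀def]; push_cast; ring
  have harg4 : (θ₀ + Complex.I * (Real.pi : ℂ) * ((2/18 : ℝ) : ℂ)) / 2
      = ((Real.pi / 2 - Real.pi / 9 : ℝ) : ℂ) * Complex.I := by
    rw [hθ₀def]; push_cast; ring
  have harg5 : (θ₀ - Complex.I * (Real.pi : ℂ) * ((2/18 : ℝ) : ℂ)) / 2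
      = ((Real.pi / 2 - 2 * Real.pi / 9 : ℝ) : ℂ) * Complex.I := by
    rw [hθ₀def]; push_cast; ring
  -- positivity facts
  have hsA : 0 < Real.sin (Real.pi / 18) :=
    Real.sin_pos_of_pos_of_lt_pi (by positivity) (by linarith)
  have hcA : 0 < Real.cos (Real.pi / 18) :=
    Real.cos_pos_of_mem_Ioo ⟨by linarith, by linarith⟩
  have hsB : 0 < Real.sin (Real.pi / 9) :=
    Real.sin_pos_of_pos_of_lt_pi (by positivity) (by linarith)
  have hcB : 0 < Real.cos (Real.pi / 9) :=
    Real.cos_pos_of_mem_Ioo ⟨by linarith, by linarith⟩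
  have hsC : 0 < Real.sin (2 * Real.pi / 9) :=
    Real.sin_pos_of_pos_of_lt_pi (by positivity) (by linarith)
  have hcC : 0 < Real.cos (2 * Real.pi / 9) :=
    Real.cos_pos_of_mem_Ioo ⟨by linarith, by linarith⟩
  have htanB : 0 < Real.tan (Real.pi / 9) :=
    Real.tan_pos_of_pos_of_lt_pi_div_two (by positivity) (by linarith)
  have htanC : 0 < Real.tan (2 * Real.pi / 9) :=
    Real.tan_pos_of_pos_of_lt_pi_div_two (by positivity) (by linarith)
  -- cosines at the five points are nonzero
  have hc1 : Real.cos (Real.pi - Real.pi / 3) ≠ 0 := by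
    rw [Real.cos_pi_sub, Real.cos_pi_div_three]; norm_num
  have hc2 : Real.cos (Real.pi - (Real.pi / 2 - Real.pi / 18)) ≠ 0 := by
    rw [Real.cos_pi_sub, Real.cos_pi_div_two_sub]
    exact neg_ne_zero.mpr hsA.ne'
  have hc3 : Real.cos (Real.pi / 9) ≠ 0 := hcB.ne'
  have hc4 : Real.cos (Real.pi / 2 - Real.pi / 9) ≠ 0 := by
    rw [Real.cos_pi_div_two_sub]; exact hsB.ne'
  have hc5 : Real.cos (Real.pi / 2 - 2 * Real.pi / 9) ≠ 0 := by
    rw [Real.cos_pi_div_two_sub]; exact hsC.ne'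
  -- values of tanh at the five points
  have hv : ∀ (x : ℝ), Complex.tanh ((x : ℂ) * Complex.I)
      = ((Real.tan x : ℝ) : ℂ) * Complex.I := by
    intro x
    rw [Complex.tanh_mul_I, Complex.ofReal_tan]
  have hcosh : ∀ (x : ℝ), Real.cos x ≠ 0 → Complex.cosh ((x : ℂ) * Complex.I) ≠ 0 := by
    intro x hx
    rw [Complex.cosh_mul_I, ← Complex.ofReal_cos]
    exact Complex.ofReal_ne_zero.mpr hx
  -- the regular part R
  set R : ℂ → ℂ := fun θ =>
    Complex.tanh ((θ + Complex.I * (Real.pi : ℂ) * ((12/18 : ℝ) : ℂ)) / 2) *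
      fblock (8/18) θ * fblock (2/18) θ with hRdef
  -- denominators nonzero (for continuity of the fblocks)
  have hden3 : Complex.tanh ((θ₀ - Complex.I * (Real.pi : ℂ) * ((8/18 : ℝ) : ℂ)) / 2) ≠ 0 := by
    rw [harg3, hv]
    exact mul_ne_zero (Complex.ofReal_ne_zero.mpr htanB.ne') Complex.I_ne_zero
  have hden5 : Complex.tanh ((θ₀ - Complex.I * (Real.pi : ℂ) * ((2/18 : ℝ) : ℂ)) / 2) ≠ 0 := by
    rw [harg5, hv, Real.tan_pi_div_two_sub]
    exact mul_ne_zero (Complex.ofReal_ne_zero.mpr (inv_ne_zero htanC.ne')) Complex.I_ne_zero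
  -- continuity of tanh ((θ ± c)/2) at θ₀
  have hcont : ∀ (c : ℂ), Complex.cosh ((θ₀ + c) / 2) ≠ 0 →
      ContinuousAt (fun θ : ℂ => Complex.tanh ((θ + c) / 2)) θ₀ := by
    intro c hc
    have hlin : ContinuousAt (fun θ : ℂ => (θ + c) / 2) θ₀ :=
      ((continuous_id.add continuous_const).div_const 2).continuousAt
    exact ContinuousAt.comp (f := fun θ : ℂ => (θ + c) / 2) (x := θ₀) (continuousAt_ctanh hc) hlin
  have hcont' : ∀ (c : ℂ), Complex.cosh ((θ₀ - c) / 2) ≠ 0 →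
      ContinuousAt (fun θ : ℂ => Complex.tanh ((θ - c) / 2)) θ₀ := by
    intro c hc
    have hlin : ContinuousAt (fun θ : ℂ => (θ - c) / 2) θ₀ :=
      ((continuous_id.sub continuous_const).div_const 2).continuousAt
    exact ContinuousAt.comp (f := fun θ : ℂ => (θ - c) / 2) (x := θ₀) (continuousAt_ctanh hc) hlin
  have hcontR : ContinuousAt R θ₀ := by
    simp only [hRdef, fblock]
    refine ContinuousAt.mul (ContinuousAt.mul ?_ (ContinuousAt.div ?_ ?_ hden3))
      (ContinuousAt.div ?_ ?_ hden5)
    · exact hcont _ (harg1 ▸ hcosh _ hc1)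
    · exact hcont _ (harg2 ▸ hcosh _ hc2)
    · exact hcont' _ (harg3 ▸ hcosh _ hc3)
    · exact hcont _ (harg4 ▸ hcosh _ hc4)
    · exact hcont' _ (harg5 ▸ hcosh _ hc5)
  -- the singular factor tends to 2
  have hsub : Tendsto (fun θ : ℂ => θ - θ₀) (nhdsWithin θ₀ {θ₀}ᶜ)
      (nhdsWithin 0 {(0:ℂ)}ᶜ) := by
    rw [tendsto_nhdsWithin_iff]
    constructor
    · have h0 : Tendsto (fun θ : ℂ => θ - θ₀) (nhds θ₀) (nhds (θ₀ - θ₀)) :=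
        (continuous_id.sub continuous_const).tendsto θ₀
      rw [sub_self] at h0
      exact h0.mono_left nhdsWithin_le_nhds
    · filter_upwards [self_mem_nhdsWithin] with θ hθ
      simp only [Set.mem_compl_iff, Set.mem_singleton_iff] at hθ ⊢
      exact sub_ne_zero.mpr hθ
  have hg : Tendsto (fun θ : ℂ => (θ - θ₀) / Complex.tanh ((θ - θ₀) / 2))
      (nhdsWithin θ₀ {θ₀}ᶜ) (nhds 2) := tendsto_z_div_tanh_half.comp hsub
  have hRt : Tendsto R (nhdsWithin θ₀ {θ₀}ᶜ) (nhds (R θ₀)) :=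
    hcontR.continuousWithinAt
  have htot := hg.mul hRt
  -- the value of 2 * R θ₀
  have hval : 2 * R θ₀ = Complex.I *
      ((2 * Real.sqrt 3 * (Real.cos (Real.pi / 18) / Real.sin (Real.pi / 18)) *
        (Real.cos (Real.pi / 9) / Real.sin (Real.pi / 9)) ^ 2 *
        (Real.sin (2 * Real.pi / 9) / Real.cos (2 * Real.pi / 9)) : ℝ) : ℂ) := by
    simp only [hRdef, fblock]
    rw [harg1, harg2, harg3, harg4, harg5, hv, hv, hv, hv, hv,
      mul_div_mul_right _ _ Complex.I_ne_zero, mul_div_mul_right _ _ Complex.I_ne_zero]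
    have hreal : 2 * (Real.tan (Real.pi - Real.pi / 3) *
        (Real.tan (Real.pi - (Real.pi / 2 - Real.pi / 18)) / Real.tan (Real.pi / 9)) *
        (Real.tan (Real.pi / 2 - Real.pi / 9) / Real.tan (Real.pi / 2 - 2 * Real.pi / 9)))
        = 2 * Real.sqrt 3 * (Real.cos (Real.pi / 18) / Real.sin (Real.pi / 18)) *
          (Real.cos (Real.pi / 9) / Real.sin (Real.pi / 9)) ^ 2 *
          (Real.sin (2 * Real.pi / 9) / Real.cos (2 * Real.pi / 9)) := by
      rw [Real.tan_pi_sub, Real.tan_pi_sub, Real.tan_pi_div_two_sub, Real.tan_pi_div_two_sub,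
        Real.tan_pi_div_two_sub, Real.tan_pi_div_three,
        Real.tan_eq_sin_div_cos (Real.pi / 18), Real.tan_eq_sin_div_cos (Real.pi / 9),
        Real.tan_eq_sin_div_cos (2 * Real.pi / 9)]
      field_simp
    have hstep : (2:ℂ) * ((Real.tan (Real.pi - Real.pi / 3) : ℂ) * Complex.I *
          ((Real.tan (Real.pi - (Real.pi / 2 - Real.pi / 18)) : ℂ) /
            (Real.tan (Real.pi / 9) : ℂ)) *
          ((Real.tan (Real.pi / 2 - Real.pi / 9) : ℂ) /
            (Real.tan (Real.pi / 2 - 2 * Real.pi / 9) : ℂ)))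
        = Complex.I * ((2 * (Real.tan (Real.pi - Real.pi / 3) *
            (Real.tan (Real.pi - (Real.pi / 2 - Real.pi / 18)) / Real.tan (Real.pi / 9)) *
            (Real.tan (Real.pi / 2 - Real.pi / 9) /
              Real.tan (Real.pi / 2 - 2 * Real.pi / 9))) : ℝ) : ℂ) := by
      push_cast; ring
    rw [hstep, hreal]
  rw [hval] at htot
  refine htot.congr fun θ => ?_
  have hc12 : Complex.I * (Real.pi : ℂ) * ((12/18 : ℝ) : ℂ) = θ₀ := by
    rw [hθ₀def]; push_cast; ring
  simp only [S22, fblock, hRdef]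
  rw [hc12]
  ring
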